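/- Let H be a real Hilbert space, D ⊆ H nonempty closed and convex, and T : H → H nonexpansive on D. Let (x_n) be a sequence in D and p ∈ D. If (x_n) converges weakly to p and (x_n − T x_n) converges strongly to 0, then p is a fixed point of T. -/

import Mathlib

open Filter Topology TopologicalSpace Function

variable {H : Type*} [NormedAddCommGroup H] [InnerProductSpace ℝ H]

def WeakConverge (x : ℕ → H) (p : H) : Prop :=
  Tendsto ((toWeakSpace ℝ H) ∘ x) atTop (nhds ((toWeakSpace ℝ H) p))

def FixSet (T : H → H) : Set H := {x | Function.IsFixedPt T x}

def QuasiNonexpansiveOn (T : H → H) (s : Set H) : Prop :=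
  ∀ ⦃x⦄, x ∈ s → ∀ ⦃y⦄, y ∈ FixSet T ∩ s → ‖T x - y‖ ≤ ‖x - y‖

def NonexpansiveOn (T : H → H) (s : Set H) : Prop := LipschitzOnWith 1 T s

theorem weakLimit_mem_fixedPoints_of_strongly_tendsto_sub [CompleteSpace H]
    {D : Set H} (hD_closed : IsClosed D) (hDc : Convex ℝ D) (hDn : D.Nonempty)
    {T : H → H} (hT_nonexp : NonexpansiveOn T D)
    (x : ℕ → H) (hx : ∀ n, x n ∈ D) (p : H) (hp : p ∈ D)
    (hw : WeakConverge x p)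
    (he : Tendsto (fun n => x n - T (x n)) atTop (nhds 0)) : p ∈ FixSet T := by
  -- weak convergence : every continuous linear functional converges
  have hweak : ∀ f : H →L[ℝ] ℝ, Tendsto (fun n => f (x n)) atTop (𝓝 (f p)) := by
    intro f
    have hc : Continuous fun z : WeakSpace ℝ H => f z :=
      WeakBilin.eval_continuous ((topDualPairing ℝ H).flip) f
    exact (hc.tendsto _).comp hw
  -- the sequence is bounded (Banach–Steinhaus)
  obtain ⟨C, hC⟩ : ∃ C, ∀ n, ‖innerSL ℝ (x n)‖ ≤ C := by
    apply banach_steinhaus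
    intro y
    obtain ⟨C, hC⟩ := (hweak (innerSL ℝ y)).norm.bddAbove_range
    refine ⟨C, fun n => ?_⟩
    have h1 : ‖(innerSL ℝ (x n)) y‖ = ‖(innerSL ℝ y) (x n)‖ := by
      simp [real_inner_comm]
    rw [h1]
    exact hC (Set.mem_range_self n)
  have hxbound : ∀ n, ‖x n - p‖ ≤ C + ‖p‖ := fun n => by
    have h1 : ‖x n‖ ≤ C := by simpa [innerSL_apply_norm] using hC n
    calc ‖x n - p‖ ≤ ‖x n‖ + ‖p‖ := norm_sub_le _ _
    _ ≤ C + ‖p‖ := by linarith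
  set M : ℝ := C + ‖p‖ with hM
  have hM0 : 0 ≤ M := le_trans (norm_nonneg (x 0 - p)) (hxbound 0)
  set q : H := T p with hq
  set ε : ℕ → ℝ := fun n => ‖x n - T (x n)‖ with hε
  -- inner product term tends to 0
  have hinner : Tendsto (fun n => inner ℝ (x n - p) (p - q) : ℕ → ℝ) atTop (𝓝 0) := by
    have h1 := hweak (innerSL ℝ (p - q))
    have h2 := h1.sub (tendsto_const_nhds (x := (innerSL ℝ (p - q)) p))
    simp only [sub_self] at h2
    convert h2 using 2 with n
    simp only [innerSL_apply_apply, inner_sub_left, inner_sub_right]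
    rw [real_inner_comm (x n) q, real_inner_comm (x n) p, real_inner_comm q p]
    ring
  have hε0 : Tendsto ε atTop (𝓝 0) := by
    simpa using he.norm
  -- key pointwise inequality
  have hkey : ∀ n, ‖p - q‖ ^ 2 ≤ ε n ^ 2 + 2 * ε n * M + 2 * |(inner ℝ (x n - p) (p - q) : ℝ)| := by
    intro n
    have hnl : ‖T (x n) - q‖ ≤ ‖x n - p‖ := by
      have := hT_nonexp.dist_le_mul _ (hx n) _ hp
      simpa [dist_eq_norm] using this
    have h1 : ‖x n - q‖ ≤ ε n + ‖x n - p‖ := by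
      calc ‖x n - q‖ = ‖(x n - T (x n)) + (T (x n) - q)‖ := by abel_nf
      _ ≤ ‖x n - T (x n)‖ + ‖T (x n) - q‖ := norm_add_le _ _
      _ ≤ ε n + ‖x n - p‖ := by exact add_le_add le_rfl hnl
    have h2 : ‖x n - q‖ ^ 2 = ‖x n - p‖ ^ 2 + 2 * inner ℝ (x n - p) (p - q) + ‖p - q‖ ^ 2 := by
      have := @norm_add_sq_real _ _ _ (x n - p) (p - q)
      convert this using 2
      abel
    have h3 : ‖x n - q‖ ^ 2 ≤ (ε n + ‖x n - p‖) ^ 2 := by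
      have h0 : 0 ≤ ‖x n - q‖ := norm_nonneg _
      nlinarith
    have h4 := hxbound n
    have h5 : -(inner ℝ (x n - p) (p - q) : ℝ) ≤ |(inner ℝ (x n - p) (p - q) : ℝ)| := neg_le_abs _
    have h6 : 0 ≤ ε n := norm_nonneg _
    nlinarith
  -- limit of the RHS is 0
  have hL : Tendsto (fun n => ε n ^ 2 + 2 * ε n * M + 2 * |(inner ℝ (x n - p) (p - q) : ℝ)|)
      atTop (𝓝 (0 ^ 2 + 2 * 0 * M + 2 * |0|)) := by
    exact (((hε0.pow 2).add ((hε0.const_mul 2).mul_const M)).add ((hinner.abs).const_mul 2))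
  simp only [abs_zero, mul_zero, zero_mul, add_zero, zero_add] at hL
  have : ‖p - q‖ ^ 2 ≤ 0 := by
    simpa using ge_of_tendsto' hL hkey
  have hpq : p = q := by
    have : ‖p - q‖ = 0 := by nlinarith [norm_nonneg (p - q), sq_nonneg ‖p - q‖]
    rwa [norm_sub_eq_zero_iff] at this
  exact hpq.symm
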